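/- arXiv:1011.4880 — 2 statements merged into one kernel-verified Lean document; each statement's English description precedes it below -/
import Mathlib

section
/- Let a < b be real numbers and let f and g be differentiable functions on the open interval (a,b). Suppose that either g'(x) > 0 for all x ∈ (a,b) or g'(x) < 0 for all x ∈ (a,b). If the function x ↦ f'(x)/g'(x) is strictly increasing on (a,b) and the finite one-sided limits f(b⁻) and g(b⁻) exist, then the function x ↦ (f(x) − f(b⁻))/(g(x) − g(b⁻)) is strictly increasing on (a,b). -/
open Set Filter

private lemma lhopital_aux_pos
    (a b : ℝ) (hab : a < b) (f g f' g' : ℝ → ℝ)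
    (hf : ∀ x ∈ Set.Ioo a b, HasDerivAt f (f' x) x)
    (hg : ∀ x ∈ Set.Ioo a b, HasDerivAt g (g' x) x)
    (hg' : ∀ x ∈ Set.Ioo a b, 0 < g' x)
    (hmono : StrictMonoOn (fun x => f' x / g' x) (Set.Ioo a b))
    (fb gb : ℝ)
    (hfb : Filter.Tendsto f (nhdsWithin b (Set.Iio b)) (nhds fb))
    (hgb : Filter.Tendsto g (nhdsWithin b (Set.Iio b)) (nhds gb)) :
    StrictMonoOn (fun x => (f x - fb) / (g x - gb)) (Set.Ioo a b) := by
  have hgmono : StrictMonoOn g (Set.Ioo a b) := by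
    apply strictMonoOn_of_deriv_pos (convex_Ioo a b)
    · exact fun x hx => ((hg x hx).continuousAt).continuousWithinAt
    · intro x hx
      rw [interior_Ioo] at hx
      rw [(hg x hx).deriv]
      exact hg' x hx
  have hglt : ∀ x ∈ Set.Ioo a b, g x < gb := by
    intro x hx
    set y := (x + b) / 2 with hydef
    have hy : y ∈ Set.Ioo x b := ⟨by rw [hydef]; linarith [hx.2], by rw [hydef]; linarith [hx.2]⟩
    have hy' : y ∈ Set.Ioo a b := ⟨lt_trans hx.1 hy.1, hy.2⟩
    have h1 : g x < g y := hgmono hx hy' hy.1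
    have h2 : g y ≤ gb := by
      apply ge_of_tendsto hgb
      filter_upwards [Ioo_mem_nhdsLT_of_mem ⟨hy.2, le_refl b⟩] with t ht
      exact (hgmono hy' ⟨lt_trans hy'.1 ht.1, ht.2⟩ ht.1).le
    linarith
  have hkey : ∀ x ∈ Set.Ioo a b, f x - fb < (f' x / g' x) * (g x - gb) := by
    intro x hx
    set m := f' x / g' x with hm
    set φ := fun t => f t - m * g t with hφ
    have hφmono : StrictMonoOn φ (Set.Ico x b) := by
      apply strictMonoOn_of_deriv_pos (convex_Ico x b)
      · intro t ht
        have ht' : t ∈ Set.Ioo a b := ⟨lt_of_lt_of_le hx.1 ht.1, ht.2⟩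
        exact (((hf t ht').sub ((hg t ht').const_mul m)).continuousAt).continuousWithinAt
      · intro t ht
        rw [interior_Ico] at ht
        have ht' : t ∈ Set.Ioo a b := ⟨lt_trans hx.1 ht.1, ht.2⟩
        rw [(show HasDerivAt φ _ t from (hf t ht').sub ((hg t ht').const_mul m)).deriv]
        have h1 : m < f' t / g' t := hmono hx ht' ht.1
        have h2 := hg' t ht'
        have h3 : m * g' t < (f' t / g' t) * g' t := mul_lt_mul_of_pos_right h1 h2
        rw [div_mul_cancel₀ _ h2.ne'] at h3
        linarith
    set y := (x + b) / 2 with hydef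
    have hy : y ∈ Set.Ioo x b := ⟨by rw [hydef]; linarith [hx.2], by rw [hydef]; linarith [hx.2]⟩
    have h1 : φ x < φ y := hφmono ⟨le_refl x, hx.2⟩ ⟨hy.1.le, hy.2⟩ hy.1
    have h2 : φ y ≤ fb - m * gb := by
      apply ge_of_tendsto (hfb.sub (hgb.const_mul m))
      filter_upwards [Ioo_mem_nhdsLT_of_mem ⟨hy.2, le_refl b⟩] with t ht
      exact (hφmono ⟨hy.1.le, hy.2⟩ ⟨(hy.1.trans ht.1).le, ht.2⟩ ht.1).le
    have h3 : φ x < fb - m * gb := lt_of_lt_of_le h1 h2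
    simp only [hφ] at h3
    have h4 : m * (g x - gb) = m * g x - m * gb := mul_sub m (g x) gb
    linarith
  have hderiv : ∀ x ∈ Set.Ioo a b,
      HasDerivAt (fun x => (f x - fb) / (g x - gb))
        ((f' x * (g x - gb) - (f x - fb) * g' x) / (g x - gb) ^ 2) x := by
    intro x hx
    have hne : g x - gb ≠ 0 := sub_ne_zero.2 (hglt x hx).ne
    exact ((hf x hx).sub_const fb).div ((hg x hx).sub_const gb) hne
  apply strictMonoOn_of_deriv_pos (convex_Ioo a b)
  · exact fun x hx => (hderiv x hx).continuousAt.continuousWithinAt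
  · intro x hx
    rw [interior_Ioo] at hx
    rw [(hderiv x hx).deriv]
    have h2 := hg' x hx
    have h3 := hglt x hx
    have hne : g x - gb ≠ 0 := sub_ne_zero.2 h3.ne
    apply div_pos
    · have h4 := hkey x hx
      have h5 : (f x - fb) * g' x < (f' x / g' x) * (g x - gb) * g' x :=
        mul_lt_mul_of_pos_right h4 h2
      have h6 : (f' x / g' x) * (g x - gb) * g' x = f' x * (g x - gb) := by
        field_simp
      linarith
    · exact pow_two_pos_of_ne_zero hne

/-- L'Hôpital-type rule for monotonicity (right endpoint, increasing case). -/
theorem lhopital_monotone_right_increasing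
    (a b : ℝ) (hab : a < b) (f g f' g' : ℝ → ℝ)
    (hf : ∀ x ∈ Set.Ioo a b, HasDerivAt f (f' x) x)
    (hg : ∀ x ∈ Set.Ioo a b, HasDerivAt g (g' x) x)
    (hg' : (∀ x ∈ Set.Ioo a b, 0 < g' x) ∨ (∀ x ∈ Set.Ioo a b, g' x < 0))
    (hmono : StrictMonoOn (fun x => f' x / g' x) (Set.Ioo a b))
    (fb gb : ℝ)
    (hfb : Filter.Tendsto f (nhdsWithin b (Set.Iio b)) (nhds fb))
    (hgb : Filter.Tendsto g (nhdsWithin b (Set.Iio b)) (nhds gb)) :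
    StrictMonoOn (fun x => (f x - fb) / (g x - gb)) (Set.Ioo a b) := by
  rcases hg' with hpos | hneg
  · exact lhopital_aux_pos a b hab f g f' g' hf hg hpos hmono fb gb hfb hgb
  · have h := lhopital_aux_pos a b hab (fun x => -f x) (fun x => -g x)
      (fun x => -f' x) (fun x => -g' x)
      (fun x hx => (hf x hx).neg) (fun x hx => (hg x hx).neg)
      (fun x hx => by simpa using hneg x hx)
      (by
        have : (fun x => -f' x / -g' x) = fun x => f' x / g' x := by
          funext x; exact neg_div_neg_eq _ _
        rw [this]; exact hmono)
      (-fb) (-gb) hfb.neg hgb.neg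
    have heq : (fun x => (-f x - -fb) / (-g x - -gb))
        = fun x => (f x - fb) / (g x - gb) := by
      funext x
      rw [show -f x - -fb = -(f x - fb) by ring, show -g x - -gb = -(g x - gb) by ring,
        neg_div_neg_eq]
    rwa [heq] at h
end

section
/- Upper bound for the q-exponential: fix q ∈ (0,1), let a = q^m and b = q^ℓ be points of the q-scale with a < b, suppose q^{-1}a ≤ b and b < 1/(1−q) and q^{-1}a < 1/(1−q), and let n ∈ ℕ, n ≥ 1. Then for every point x of the q-scale with q^{-1}a ≤ x ≤ b one has e_q^x ≤ Σ_{k=0}^{n−1} (e_q^a/[k]!) (x−a)^k_q + [ (e_q^{b} − Σ_{k=0}^{n−1} (e_q^a/[k]!) (b − a)^k_q ) / (b − a)^n_q ] · (x−a)^n_q. -/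
/-- The q-bracket of a natural number: `[k] = (q^k - 1)/(q - 1)`. -/
noncomputable def qNat (q : ℝ) (k : ℕ) : ℝ := (q ^ k - 1) / (q - 1)

/-- The q-factorial: `[0]! = 1`, `[k+1]! = [k+1] ⬝ [k]!`. -/
noncomputable def qFactorial (q : ℝ) : ℕ → ℝ
  | 0 => 1
  | k + 1 => qNat q (k + 1) * qFactorial q k

/-- The q-shifted power `(x - a)^k_q = ∏_{j=0}^{k-1} (x - q^j a)`. -/
noncomputable def qShiftedPow (q x a : ℝ) (k : ℕ) : ℝ :=
  ∏ j ∈ Finset.range k, (x - q ^ j * a)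

/-- The q-exponential `e_q^x = Σ_{k=0}^∞ x^k/[k]!`. -/
noncomputable def qExp (q x : ℝ) : ℝ := ∑' k : ℕ, x ^ k / qFactorial q k

open Filter Finset

section aux
variable {q : ℝ} (hq0 : 0 < q) (hq1 : q < 1)

lemma qNat_eq (k : ℕ) : qNat q k = (1 - q ^ k) / (1 - q) := by
  unfold qNat
  by_cases h : q = 1
  · simp [h]
  · rw [div_eq_div_iff (sub_ne_zero.2 h) (fun hc => h (by linarith [sub_eq_zero.1 hc]))]
    ring

include hq0 hq1

lemma one_le_qNat (k : ℕ) : 1 ≤ qNat q (k + 1) := by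
  have h1q : 0 < 1 - q := by linarith
  rw [qNat_eq, le_div_iff₀ h1q, one_mul]
  have : q ^ (k + 1) ≤ q := pow_le_of_le_one hq0.le hq1.le (Nat.succ_ne_zero k)
  linarith

lemma one_le_qFactorial : ∀ k, 1 ≤ qFactorial q k
  | 0 => le_refl 1
  | k + 1 => by
      have h1 := one_le_qNat hq0 hq1 k
      have h2 := one_le_qFactorial (k := k)
      calc (1:ℝ) = 1 * 1 := by ring
        _ ≤ qNat q (k+1) * qFactorial q k := by
            apply mul_le_mul h1 h2 zero_le_one (le_trans zero_le_one h1)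
        _ = qFactorial q (k+1) := rfl

lemma qFactorial_pos (k : ℕ) : 0 < qFactorial q k :=
  lt_of_lt_of_le one_pos (one_le_qFactorial hq0 hq1 k)

lemma qFactorial_le_add (j n : ℕ) : qFactorial q j ≤ qFactorial q (j + n) := by
  induction n with
  | zero => simp
  | succ n ih =>
      calc qFactorial q j ≤ qFactorial q (j + n) := ih
        _ = 1 * qFactorial q (j + n) := (one_mul _).symm
        _ ≤ qNat q (j + n + 1) * qFactorial q (j + n) :=
            mul_le_mul_of_nonneg_right (one_le_qNat hq0 hq1 _) (qFactorial_pos hq0 hq1 _).le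
        _ = qFactorial q (j + n + 1) := rfl

lemma div_qFactorial_succ (k : ℕ) :
    (1 - q ^ (k + 1)) / qFactorial q (k + 1) = (1 - q) / qFactorial q k := by
  have h1q : (1:ℝ) - q ≠ 0 := by linarith
  have hpk : q ^ (k+1) < 1 := pow_lt_one₀ hq0.le hq1 (Nat.succ_ne_zero k)
  have hF : qFactorial q k ≠ 0 := (qFactorial_pos hq0 hq1 k).ne'
  show (1 - q ^ (k + 1)) / (qNat q (k+1) * qFactorial q k) = (1 - q) / qFactorial q k
  have h2 : (1:ℝ) - q ^ (k+1) ≠ 0 := by linarith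
  rw [qNat_eq]
  field_simp

end aux

section qsp
variable {q : ℝ} (hq0 : 0 < q) (hq1 : q < 1)

lemma qShiftedPow_zero (y c : ℝ) : qShiftedPow q y c 0 = 1 := by simp [qShiftedPow]

lemma qShiftedPow_succ (y c : ℝ) (k : ℕ) :
    qShiftedPow q y c (k + 1) = qShiftedPow q y c k * (y - q ^ k * c) :=
  Finset.prod_range_succ _ _

lemma qShiftedPow_succ' (y c : ℝ) (k : ℕ) :
    qShiftedPow q y c (k + 1) = qShiftedPow q y (q * c) k * (y - c) := by
  unfold qShiftedPow
  rw [Finset.prod_range_succ']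
  congr 1
  · exact Finset.prod_congr rfl fun j _ => by rw [pow_succ]; ring
  · simp

lemma qShiftedPow_add (y c : ℝ) (n j : ℕ) :
    qShiftedPow q y c (n + j) = qShiftedPow q y c n * qShiftedPow q y (q ^ n * c) j := by
  unfold qShiftedPow
  rw [Finset.prod_range_add]
  congr 1
  exact Finset.prod_congr rfl fun t _ => by rw [pow_add]; ring

include hq0 hq1

lemma qShiftedPow_nonneg {y c : ℝ} (h0c : 0 ≤ c) (hcy : c ≤ y) (k : ℕ) :
    0 ≤ qShiftedPow q y c k := by
  apply Finset.prod_nonneg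
  intro j _
  have : q ^ j * c ≤ c := by
    nlinarith [pow_le_one₀ hq0.le hq1.le (n := j)]
  linarith

lemma qShiftedPow_le_pow {y c : ℝ} (h0c : 0 ≤ c) (hcy : c ≤ y) (k : ℕ) :
    qShiftedPow q y c k ≤ y ^ k := by
  have : y ^ k = ∏ _j ∈ Finset.range k, y := by simp
  rw [this]
  apply Finset.prod_le_prod
  · intro j _
    have : q ^ j * c ≤ c := by nlinarith [pow_le_one₀ hq0.le hq1.le (n := j)]
    linarith
  · intro j _
    have : 0 ≤ q ^ j * c := mul_nonneg (pow_nonneg hq0.le j) h0c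
    linarith

lemma qShiftedPow_mono {x y c : ℝ} (h0c : 0 ≤ c) (hcx : c ≤ x) (hxy : x ≤ y) (k : ℕ) :
    qShiftedPow q x c k ≤ qShiftedPow q y c k := by
  apply Finset.prod_le_prod
  · intro j _
    have : q ^ j * c ≤ c := by nlinarith [pow_le_one₀ hq0.le hq1.le (n := j)]
    linarith
  · intro j _
    linarith

lemma qShiftedPow_pos {y c : ℝ} (h0c : 0 ≤ c) (hcy : c < y) (k : ℕ) :
    0 < qShiftedPow q y c k := by
  apply Finset.prod_pos
  intro j _
  have : q ^ j * c ≤ c := by nlinarith [pow_le_one₀ hq0.le hq1.le (n := j)]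
  linarith

omit hq0 hq1 in
lemma qShiftedPow_key (y c : ℝ) (k : ℕ) :
    qShiftedPow q y c (k + 1)
      = qShiftedPow q y (q * c) (k + 1) + (q ^ (k + 1) - 1) * c * qShiftedPow q y (q * c) k := by
  rw [qShiftedPow_succ' y c k, qShiftedPow_succ y (q * c) k, pow_succ]
  ring

lemma summable_pow_div_qFactorial {y : ℝ} (hy : |y| < 1 / (1 - q)) :
    Summable (fun k => y ^ k / qFactorial q k) := by
  have h1q : (0:ℝ) < 1 - q := by linarith
  have hy0 : 0 ≤ |y| := abs_nonneg y
  set r : ℝ := ((1 - q) * |y| + 1) / 2 with hr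
  have hqy : (1 - q) * |y| < 1 := by
    rw [lt_div_iff₀ h1q] at hy
    nlinarith
  have hr1 : r < 1 := by rw [hr]; linarith
  have hr0 : 0 < r := by rw [hr]; nlinarith
  apply summable_of_ratio_norm_eventually_le hr1
  have hql : (1 - q) * |y| / r < 1 := by rw [div_lt_one hr0, hr]; linarith
  have heps : 0 < 1 - (1 - q) * |y| / r := by linarith
  have hev : ∀ᶠ k : ℕ in atTop, q ^ (k + 1) < 1 - (1 - q) * |y| / r := by
    have ht : Tendsto (fun k : ℕ => q ^ (k + 1)) atTop (nhds 0) := by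
      have := tendsto_pow_atTop_nhds_zero_of_lt_one hq0.le hq1
      exact this.comp (tendsto_add_atTop_nat 1)
    exact ht.eventually_lt_const heps
  filter_upwards [hev] with k hk
  have hF : 0 < qFactorial q k := qFactorial_pos hq0 hq1 k
  have hF1 : 0 < qFactorial q (k + 1) := qFactorial_pos hq0 hq1 (k + 1)
  have hN : |y| ≤ r * qNat q (k + 1) := by
    have hk' : (1 - q) * |y| < (1 - q ^ (k + 1)) * r :=
      (div_lt_iff₀ hr0).1 (by linarith : (1 - q) * |y| / r < 1 - q ^ (k + 1))
    rw [qNat_eq, ← mul_div_assoc, le_div_iff₀ h1q]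
    nlinarith
  rw [norm_div, norm_div, norm_pow, norm_pow, Real.norm_eq_abs, Real.norm_eq_abs,
    Real.norm_eq_abs, abs_of_pos hF, abs_of_pos hF1]
  show |y| ^ (k + 1) / (qNat q (k+1) * qFactorial q k) ≤ r * (|y| ^ k / qFactorial q k)
  have hqN : 0 < qNat q (k + 1) := lt_of_lt_of_le one_pos (one_le_qNat hq0 hq1 k)
  rw [div_le_iff₀ (by positivity), pow_succ]
  have h1 : |y| ^ k * |y| ≤ |y| ^ k * (r * qNat q (k + 1)) :=
    mul_le_mul_of_nonneg_left hN (by positivity)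
  calc |y| ^ k * |y| ≤ |y| ^ k * (r * qNat q (k + 1)) := h1
    _ = r * (|y| ^ k / qFactorial q k) * (qNat q (k + 1) * qFactorial q k) := by
        field_simp

end qsp

noncomputable def Gfun (q y c : ℝ) : ℝ := ∑' k : ℕ, qShiftedPow q y c k / qFactorial q k

section G
variable {q : ℝ} (hq0 : 0 < q) (hq1 : q < 1)
include hq0 hq1

lemma summable_G {y c : ℝ} (h0c : 0 ≤ c) (hcy : c ≤ y) (hy : y < 1 / (1 - q)) :
    Summable (fun k => qShiftedPow q y c k / qFactorial q k) := by
  have h0y : 0 ≤ y := le_trans h0c hcy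
  apply Summable.of_nonneg_of_le
    (fun k => div_nonneg (qShiftedPow_nonneg hq0 hq1 h0c hcy k) (qFactorial_pos hq0 hq1 k).le)
    (fun k => by gcongr ?_ / _
                 · exact (qFactorial_pos hq0 hq1 k).le
                 · exact qShiftedPow_le_pow hq0 hq1 h0c hcy k)
    (summable_pow_div_qFactorial hq0 hq1 (by rwa [abs_of_nonneg h0y]))

lemma summable_qExp {y : ℝ} (h0y : 0 ≤ y) (hy : y < 1 / (1 - q)) :
    Summable (fun k => y ^ k / qFactorial q k) :=
  summable_pow_div_qFactorial hq0 hq1 (by rwa [abs_of_nonneg h0y])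

lemma one_le_qExp {y : ℝ} (h0y : 0 ≤ y) (hy : y < 1 / (1 - q)) : 1 ≤ qExp q y := by
  have hs := summable_qExp hq0 hq1 h0y hy
  have h0 : (1:ℝ) = y ^ 0 / qFactorial q 0 := by simp [qFactorial]
  rw [qExp, h0]
  exact Summable.le_tsum hs 0 fun j _ => div_nonneg (pow_nonneg h0y j) (qFactorial_pos hq0 hq1 j).le

set_option maxHeartbeats 800000 in
lemma qExp_q_mul {c : ℝ} (h0c : 0 ≤ c) (hc : c < 1 / (1 - q)) :
    qExp q (q * c) = (1 - (1 - q) * c) * qExp q c := by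
  have hs : Summable (fun k => c ^ k / qFactorial q k) := summable_qExp hq0 hq1 h0c hc
  have hs2 : Summable (fun k => (q * c) ^ k / qFactorial q k) := by
    apply summable_qExp hq0 hq1 (by positivity)
    nlinarith
  have hd : Summable (fun k => (c ^ k - (q * c) ^ k) / qFactorial q k) := by
    have := hs.sub hs2
    simpa [sub_div] using this
  have key : qExp q c - qExp q (q * c) = (1 - q) * c * qExp q c := by
    have h1 : qExp q c - qExp q (q * c)
        = ∑' k : ℕ, (c ^ k - (q * c) ^ k) / qFactorial q k := by
      rw [qExp, qExp, ← Summable.tsum_sub hs hs2]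
      congr 1; funext k; rw [div_sub_div_same]
    rw [h1, Summable.tsum_eq_zero_add hd]
    have h2 : ∀ k : ℕ, (c ^ (k+1) - (q * c) ^ (k+1)) / qFactorial q (k+1)
        = (1 - q) * c * (c ^ k / qFactorial q k) := by
      intro k
      have : c ^ (k+1) - (q * c) ^ (k+1) = c * c ^ k * (1 - q ^ (k+1)) := by
        rw [mul_pow]; ring
      rw [this, mul_div_assoc, div_qFactorial_succ hq0 hq1 k]
      ring
    simp only [h2]
    rw [tsum_mul_left]
    simp [qExp]
  linarith [key]

set_option maxHeartbeats 800000 in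
lemma Gfun_q_mul {y c : ℝ} (h0c : 0 ≤ c) (hcy : c ≤ y) (hy : y < 1 / (1 - q)) :
    Gfun q y c = (1 - (1 - q) * c) * Gfun q y (q * c) := by
  have h0c' : 0 ≤ q * c := by positivity
  have hcy' : q * c ≤ y := by nlinarith
  have hf : Summable (fun k => qShiftedPow q y c k / qFactorial q k) :=
    summable_G hq0 hq1 h0c hcy hy
  have hg : Summable (fun k => qShiftedPow q y (q * c) k / qFactorial q k) :=
    summable_G hq0 hq1 h0c' hcy' hy
  have hg1 : Summable (fun k => qShiftedPow q y (q * c) (k + 1) / qFactorial q (k + 1)) :=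
    (summable_nat_add_iff 1).2 hg
  have hkey : ∀ k : ℕ, qShiftedPow q y c (k + 1) / qFactorial q (k + 1)
      = qShiftedPow q y (q * c) (k + 1) / qFactorial q (k + 1)
        - (1 - q) * c * (qShiftedPow q y (q * c) k / qFactorial q k) := by
    intro k
    rw [qShiftedPow_key y c k]
    have hsplit : (qShiftedPow q y (q * c) (k + 1) + (q ^ (k + 1) - 1) * c * qShiftedPow q y (q * c) k)
        / qFactorial q (k + 1)
        = qShiftedPow q y (q * c) (k + 1) / qFactorial q (k + 1)
          - c * qShiftedPow q y (q * c) k * ((1 - q ^ (k + 1)) / qFactorial q (k + 1)) := by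
      rw [add_div]
      ring
    rw [hsplit, div_qFactorial_succ hq0 hq1 k]
    ring
  rw [Gfun, Summable.tsum_eq_zero_add hf]
  simp only [hkey]
  rw [Summable.tsum_sub hg1 ((hg.mul_left ((1 - q) * c)))]
  rw [tsum_mul_left]
  rw [Gfun, Summable.tsum_eq_zero_add hg]
  simp [qShiftedPow_zero, qFactorial]
  ring

end G

section taylor
variable {q : ℝ} (hq0 : 0 < q) (hq1 : q < 1)
include hq0 hq1

lemma h_const {y a : ℝ} (h0a : 0 ≤ a) (hay : a ≤ y) (hy : y < 1 / (1 - q)) (N : ℕ) :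
    qExp q a * Gfun q y a = qExp q (q ^ N * a) * Gfun q y (q ^ N * a) := by
  induction N with
  | zero => simp
  | succ N ih =>
      have h0c : 0 ≤ q ^ N * a := by positivity
      have hone : q ^ N ≤ 1 := pow_le_one₀ hq0.le hq1.le
      have hcy : q ^ N * a ≤ y := le_trans (by nlinarith) hay
      have hstep : q ^ (N + 1) * a = q * (q ^ N * a) := by rw [pow_succ]; ring
      rw [ih, hstep, qExp_q_mul hq0 hq1 h0c (lt_of_le_of_lt hcy hy),
        Gfun_q_mul hq0 hq1 h0c hcy hy]
      ring

lemma tendsto_pow_mul_zero (a : ℝ) :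
    Filter.Tendsto (fun N : ℕ => q ^ N * a) Filter.atTop (nhds 0) := by
  have := (tendsto_pow_atTop_nhds_zero_of_lt_one hq0.le hq1).mul_const a
  simpa using this

omit hq0 hq1 in
lemma qExp_zero' : qExp q 0 = 1 := by
  rw [qExp, tsum_eq_single 0]
  · simp [qFactorial]
  · intro k hk
    simp [zero_pow hk]

omit hq0 hq1 in
lemma Gfun_zero (y : ℝ) : Gfun q y 0 = qExp q y := by
  unfold Gfun qExp qShiftedPow
  simp

lemma tendsto_qExp_seq {a : ℝ} (h0a : 0 ≤ a) (ha : a < 1 / (1 - q)) :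
    Filter.Tendsto (fun N : ℕ => qExp q (q ^ N * a)) Filter.atTop (nhds 1) := by
  have hcont : ContinuousOn (fun c : ℝ => ∑' k : ℕ, c ^ k / qFactorial q k) (Set.Icc 0 a) := by
    apply continuousOn_tsum (u := fun k => a ^ k / qFactorial q k)
    · intro k; fun_prop
    · exact summable_qExp hq0 hq1 h0a ha
    · intro k c hc
      rw [Real.norm_eq_abs, abs_div, abs_pow, abs_of_pos (qFactorial_pos hq0 hq1 k),
        abs_of_nonneg hc.1]
      gcongr ?_ / _
      · exact (qFactorial_pos hq0 hq1 k).le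
      · exact pow_le_pow_left₀ hc.1 hc.2 k
  have hmem : (0:ℝ) ∈ Set.Icc (0:ℝ) a := ⟨le_refl 0, h0a⟩
  have hwithin : Filter.Tendsto (fun N : ℕ => q ^ N * a) Filter.atTop
      (nhdsWithin 0 (Set.Icc 0 a)) := by
    apply tendsto_nhdsWithin_of_tendsto_nhds_of_eventually_within _ (tendsto_pow_mul_zero hq0 hq1 a)
    apply Filter.Eventually.of_forall
    intro N
    have hone : q ^ N ≤ 1 := pow_le_one₀ hq0.le hq1.le
    exact ⟨by positivity, by nlinarith⟩
  have := ((hcont 0 hmem).tendsto).comp hwithin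
  simp only [Function.comp_def] at this
  have h0 : (∑' k : ℕ, (0:ℝ) ^ k / qFactorial q k) = 1 := qExp_zero'
  rw [h0] at this
  exact this

lemma tendsto_Gfun_seq {y a : ℝ} (h0a : 0 ≤ a) (hay : a ≤ y) (hy : y < 1 / (1 - q)) :
    Filter.Tendsto (fun N : ℕ => Gfun q y (q ^ N * a)) Filter.atTop (nhds (qExp q y)) := by
  have h0y : 0 ≤ y := le_trans h0a hay
  have hcont : ContinuousOn (fun c : ℝ => ∑' k : ℕ, qShiftedPow q y c k / qFactorial q k)
      (Set.Icc 0 y) := by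
    apply continuousOn_tsum (u := fun k => y ^ k / qFactorial q k)
    · intro k
      apply ContinuousOn.div_const
      apply Continuous.continuousOn
      unfold qShiftedPow
      exact continuous_finset_prod _ (fun j _ => by fun_prop)
    · exact summable_qExp hq0 hq1 h0y hy
    · intro k c hc
      rw [Real.norm_eq_abs, abs_div, abs_of_pos (qFactorial_pos hq0 hq1 k),
        abs_of_nonneg (qShiftedPow_nonneg hq0 hq1 hc.1 hc.2 k)]
      gcongr ?_ / _
      · exact (qFactorial_pos hq0 hq1 k).le
      · exact qShiftedPow_le_pow hq0 hq1 hc.1 hc.2 k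
  have hmem : (0:ℝ) ∈ Set.Icc (0:ℝ) y := ⟨le_refl 0, h0y⟩
  have hwithin : Filter.Tendsto (fun N : ℕ => q ^ N * a) Filter.atTop
      (nhdsWithin 0 (Set.Icc 0 y)) := by
    apply tendsto_nhdsWithin_of_tendsto_nhds_of_eventually_within _ (tendsto_pow_mul_zero hq0 hq1 a)
    apply Filter.Eventually.of_forall
    intro N
    have hone : q ^ N ≤ 1 := pow_le_one₀ hq0.le hq1.le
    exact ⟨by positivity, le_trans (by nlinarith) hay⟩
  have := ((hcont 0 hmem).tendsto).comp hwithin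
  simp only [Function.comp_def] at this
  have h0 : (∑' k : ℕ, qShiftedPow q y 0 k / qFactorial q k) = qExp q y := Gfun_zero y
  rw [h0] at this
  exact this

lemma qExp_taylor {y a : ℝ} (h0a : 0 ≤ a) (hay : a ≤ y) (hy : y < 1 / (1 - q)) :
    qExp q y = qExp q a * Gfun q y a := by
  have h1 : Filter.Tendsto (fun N : ℕ => qExp q (q ^ N * a) * Gfun q y (q ^ N * a))
      Filter.atTop (nhds (1 * qExp q y)) :=
    (tendsto_qExp_seq hq0 hq1 h0a (lt_of_le_of_lt hay hy)).mul
      (tendsto_Gfun_seq hq0 hq1 h0a hay hy)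
  have h2 : (fun N : ℕ => qExp q (q ^ N * a) * Gfun q y (q ^ N * a))
      = fun _ => qExp q a * Gfun q y a := by
    funext N
    exact (h_const hq0 hq1 h0a hay hy N).symm
  rw [h2] at h1
  have := tendsto_nhds_unique h1 tendsto_const_nhds
  rw [one_mul] at this
  exact this

end taylor

section main
variable {q : ℝ} (hq0 : 0 < q) (hq1 : q < 1)
include hq0 hq1

lemma Gfun_split {y a : ℝ} (h0a : 0 ≤ a) (hay : a ≤ y) (hy : y < 1 / (1 - q)) (n : ℕ) :
    Gfun q y a = (∑ k ∈ Finset.range n, qShiftedPow q y a k / qFactorial q k)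
      + qShiftedPow q y a n *
          ∑' j : ℕ, qShiftedPow q y (q ^ n * a) j / qFactorial q (j + n) := by
  have hs := summable_G hq0 hq1 h0a hay hy
  rw [Gfun, ← Summable.sum_add_tsum_nat_add n hs]
  congr 1
  rw [← tsum_mul_left]
  congr 1
  funext j
  have h : qShiftedPow q y a (j + n) = qShiftedPow q y a n * qShiftedPow q y (q ^ n * a) j := by
    rw [add_comm, qShiftedPow_add]
  rw [h, mul_div_assoc]

lemma summable_tail {y a : ℝ} (h0a : 0 ≤ a) (hay : a ≤ y) (hy : y < 1 / (1 - q)) (n : ℕ) :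
    Summable (fun j : ℕ => qShiftedPow q y (q ^ n * a) j / qFactorial q (j + n)) := by
  have h0y : 0 ≤ y := le_trans h0a hay
  have h0c : 0 ≤ q ^ n * a := by positivity
  have hcy : q ^ n * a ≤ y := by
    have hone : q ^ n ≤ 1 := pow_le_one₀ hq0.le hq1.le
    nlinarith
  apply Summable.of_nonneg_of_le
    (fun j => div_nonneg (qShiftedPow_nonneg hq0 hq1 h0c hcy j) (qFactorial_pos hq0 hq1 _).le)
    (fun j => ?_) (summable_qExp hq0 hq1 h0y hy)
  exact div_le_div₀ (pow_nonneg h0y j) (qShiftedPow_le_pow hq0 hq1 h0c hcy j)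
    (qFactorial_pos hq0 hq1 j) (qFactorial_le_add hq0 hq1 j n)

end main


/-- Upper bound for the q-exponential on the q-scale. -/
theorem qExp_upper_bound
    (q : ℝ) (hq0 : 0 < q) (hq1 : q < 1) (m l : ℤ) (a b : ℝ)
    (ha : a = q ^ m) (hb : b = q ^ l) (hab : a < b)
    (hab' : q⁻¹ * a ≤ b) (hbr : b < 1 / (1 - q)) (har : q⁻¹ * a < 1 / (1 - q))
    (n : ℕ) (hn : 1 ≤ n) :
    ∀ x : ℝ, (∃ k : ℤ, x = q ^ k) → q⁻¹ * a ≤ x → x ≤ b →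
      qExp q x ≤
        (∑ k ∈ Finset.range n, qExp q a / qFactorial q k * qShiftedPow q x a k) +
        (qExp q b -
            ∑ k ∈ Finset.range n,
              qExp q a / qFactorial q k * qShiftedPow q b a k) /
          qShiftedPow q b a n * qShiftedPow q x a n := by
  intro x _hxscale hx1 hx2
  have h1q : (0:ℝ) < 1 - q := by linarith
  have ha0 : 0 < a := ha ▸ zpow_pos hq0 m
  have hqinv : q * q⁻¹ = 1 := mul_inv_cancel₀ hq0.ne'
  have hqi : 1 < q⁻¹ := by nlinarith
  have hax : a < x := lt_of_lt_of_le (by nlinarith) hx1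
  have hxr : x < 1 / (1 - q) := lt_of_le_of_lt hx2 hbr
  have har' : a < 1 / (1 - q) := lt_trans hab hbr
  have hTx := qExp_taylor hq0 hq1 ha0.le hax.le hxr
  have hTb := qExp_taylor hq0 hq1 ha0.le hab.le hbr
  have hsplitx := Gfun_split hq0 hq1 ha0.le hax.le hxr n
  have hsplitb := Gfun_split hq0 hq1 ha0.le hab.le hbr n
  have hsum_eq : ∀ y : ℝ,
      (∑ k ∈ Finset.range n, qExp q a / qFactorial q k * qShiftedPow q y a k)
        = qExp q a * ∑ k ∈ Finset.range n, qShiftedPow q y a k / qFactorial q k := by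
    intro y
    rw [Finset.mul_sum]
    exact Finset.sum_congr rfl fun k _ => by ring
  have hHbn : 0 < qShiftedPow q b a n := qShiftedPow_pos hq0 hq1 ha0.le hab n
  have hHxn : 0 < qShiftedPow q x a n := qShiftedPow_pos hq0 hq1 ha0.le hax n
  have hea : 1 ≤ qExp q a := one_le_qExp hq0 hq1 ha0.le har'
  have hcoef : qExp q b
      - (∑ k ∈ Finset.range n, qExp q a / qFactorial q k * qShiftedPow q b a k)
      = (qExp q a * ∑' j : ℕ, qShiftedPow q b (q ^ n * a) j / qFactorial q (j + n))
          * qShiftedPow q b a n := by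
    rw [hsum_eq b, hTb, hsplitb]
    ring
  rw [hcoef, mul_div_cancel_right₀ _ hHbn.ne']
  rw [hTx, hsplitx, hsum_eq x]
  have h0c : 0 ≤ q ^ n * a := by positivity
  have hcx : q ^ n * a ≤ x := by
    have hone : q ^ n ≤ 1 := pow_le_one₀ hq0.le hq1.le
    nlinarith
  have hExEb : (∑' j : ℕ, qShiftedPow q x (q ^ n * a) j / qFactorial q (j + n))
      ≤ ∑' j : ℕ, qShiftedPow q b (q ^ n * a) j / qFactorial q (j + n) := by
    apply Summable.tsum_le_tsum _ (summable_tail hq0 hq1 ha0.le hax.le hxr n)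
      (summable_tail hq0 hq1 ha0.le hab.le hbr n)
    intro j
    have hF := qFactorial_pos hq0 hq1 (j + n)
    have hm := qShiftedPow_mono hq0 hq1 h0c hcx hx2 j
    gcongr
  have hkey : qExp q a * (qShiftedPow q x a n
        * ∑' j : ℕ, qShiftedPow q x (q ^ n * a) j / qFactorial q (j + n))
      ≤ qExp q a * (qShiftedPow q x a n
        * ∑' j : ℕ, qShiftedPow q b (q ^ n * a) j / qFactorial q (j + n)) :=
    mul_le_mul_of_nonneg_left (mul_le_mul_of_nonneg_left hExEb hHxn.le) (by linarith)
  nlinarith [hkey]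
end
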